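/- For any prime p and any integers 0 ≤ ℓ ≤ k, there exists a real number θ with 0 ≤ θ < 6 such that the Gaussian binomial coefficient [k choose ℓ]_p equals p^(ℓ(k-ℓ)) · (1 + θ/p). -/

import Mathlib

open Finset

/-- Weierstrass product inequality: `1 - ∑ fᵢ ≤ ∏ (1 - fᵢ)` for `0 ≤ fᵢ ≤ 1`. -/
private lemma weierstrass_prod (s : Finset ℕ) (f : ℕ → ℝ)
    (h0 : ∀ i ∈ s, 0 ≤ f i) (h1 : ∀ i ∈ s, f i ≤ 1) :
    1 - ∑ i ∈ s, f i ≤ ∏ i ∈ s, (1 - f i) := by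
  induction s using Finset.cons_induction with
  | empty => simp
  | cons a s ha ih =>
    rw [Finset.sum_cons, Finset.prod_cons]
    have h0a := h0 a (Finset.mem_cons_self a s)
    have h1a := h1 a (Finset.mem_cons_self a s)
    have hS : 0 ≤ ∑ i ∈ s, f i :=
      Finset.sum_nonneg fun i hi => h0 i (Finset.mem_cons_of_mem hi)
    have hih := ih (fun i hi => h0 i (Finset.mem_cons_of_mem hi))
      (fun i hi => h1 i (Finset.mem_cons_of_mem hi))
    nlinarith [mul_le_mul_of_nonneg_left hih (by linarith : (0:ℝ) ≤ 1 - f a),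
      mul_nonneg h0a hS]

/-- Geometric tail bound: `∑_{j∈Icc a ℓ} x^j ≤ x^a / (1-x)` for `0 < x < 1`. -/
private lemma sum_Icc_pow_le (x : ℝ) (hx0 : 0 < x) (hx1 : x < 1) (a ℓ : ℕ) :
    ∑ j ∈ Finset.Icc a ℓ, x ^ j ≤ x ^ a / (1 - x) := by
  have h1x : 0 < 1 - x := by linarith
  rw [← Finset.Ico_add_one_right_eq_Icc, Finset.sum_Ico_eq_sum_range]
  simp_rw [pow_add]
  rw [← Finset.mul_sum, geom_sum_eq (ne_of_lt hx1)]
  have hrw : (x ^ (ℓ + 1 - a) - 1) / (x - 1) = (1 - x ^ (ℓ + 1 - a)) / (1 - x) := by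
    rw [← neg_div_neg_eq]; ring_nf
  rw [hrw]
  calc x ^ a * ((1 - x ^ (ℓ + 1 - a)) / (1 - x)) ≤ x ^ a * (1 / (1 - x)) := by
        gcongr
        nlinarith [pow_nonneg hx0.le (ℓ + 1 - a)]
    _ = x ^ a / (1 - x) := by ring

theorem gaussian_binomial_estimate (p k ℓ : ℕ) (hp : p.Prime) (hℓk : ℓ ≤ k) :
    ∃ θ : ℝ, 0 ≤ θ ∧ θ < 6 ∧
      ∏ j ∈ Finset.Icc 1 ℓ, ((p : ℝ) ^ (k - ℓ + j) - 1) / ((p : ℝ) ^ j - 1)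
        = (p : ℝ) ^ (ℓ * (k - ℓ)) * (1 + θ / p) := by
  have hp2 : 2 ≤ p := hp.two_le
  have hq1 : (1:ℝ) < (p:ℝ) := by exact_mod_cast hp.one_lt
  have hq0 : (0:ℝ) < (p:ℝ) := by linarith
  set x : ℝ := (p:ℝ)⁻¹ with hxdef
  have hx0 : 0 < x := by positivity
  have hx1 : x < 1 := inv_lt_one_of_one_lt₀ hq1
  have hxle : x ≤ 1/2 := by
    rw [hxdef]
    rw [inv_le_comm₀ (by positivity) (by norm_num)]
    norm_num
    exact_mod_cast hp2
  set m := k - ℓ with hm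
  have hden : ∀ j, 1 ≤ j → (0:ℝ) < 1 - x ^ j := by
    intro j hj
    have : x ^ j < 1 := pow_lt_one₀ hx0.le hx1 (by omega)
    linarith
  -- factor identity
  have hfac : ∀ j ∈ Finset.Icc 1 ℓ,
      ((p : ℝ) ^ (m + j) - 1) / ((p : ℝ) ^ j - 1)
        = (p:ℝ) ^ m * ((1 - x ^ (m+j)) / (1 - x ^ j)) := by
    intro j hj
    have hj1 : 1 ≤ j := (Finset.mem_Icc.mp hj).1
    have hd1 : ((p:ℝ) ^ j - 1) ≠ 0 := by
      have : (1:ℝ) < (p:ℝ) ^ j := one_lt_pow₀ hq1 (by omega)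
      linarith
    have hd2 : (1 - x ^ j) ≠ 0 := (hden j hj1).ne'
    have hpne : (p:ℝ) ≠ 0 := hq0.ne'
    rw [hxdef, inv_pow, inv_pow]
    have hpj : (p:ℝ) ^ j ≠ 0 := pow_ne_zero _ hpne
    have hpm : (p:ℝ) ^ m ≠ 0 := pow_ne_zero _ hpne
    have hsub : 1 - ((p:ℝ) ^ j)⁻¹ = ((p:ℝ) ^ j - 1) / (p:ℝ) ^ j := by
      field_simp
    rw [hsub, pow_add]
    field_simp
  set R : ℝ := ∏ j ∈ Finset.Icc 1 ℓ, (1 - x ^ (m+j)) / (1 - x ^ j) with hR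
  -- product decomposition
  have hprod : ∏ j ∈ Finset.Icc 1 ℓ, ((p : ℝ) ^ (m + j) - 1) / ((p : ℝ) ^ j - 1)
      = (p:ℝ) ^ (ℓ * m) * R := by
    rw [Finset.prod_congr rfl hfac, Finset.prod_mul_distrib, Finset.prod_const,
      Nat.card_Icc, Nat.add_sub_cancel, ← pow_mul, mul_comm m ℓ, hR]
  -- lower bound
  have hR1 : 1 ≤ R := by
    rw [hR]
    have h1 : ∏ j ∈ Finset.Icc 1 ℓ, (1:ℝ) ≤ ∏ j ∈ Finset.Icc 1 ℓ, (1 - x ^ (m+j)) / (1 - x ^ j) := by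
      apply Finset.prod_le_prod (fun _ _ => zero_le_one)
      intro j hj
      have hj1 : 1 ≤ j := (Finset.mem_Icc.mp hj).1
      rw [le_div_iff₀ (hden j hj1)]
      have : x ^ (m + j) ≤ x ^ j := pow_le_pow_of_le_one hx0.le hx1.le (by omega)
      linarith
    simpa using h1
  -- upper bound
  have hRinv : R ≤ (∏ j ∈ Finset.Icc 1 ℓ, (1 - x ^ j))⁻¹ := by
    rw [← Finset.prod_inv_distrib, hR]
    apply Finset.prod_le_prod
    · intro j hj
      have hj1 : 1 ≤ j := (Finset.mem_Icc.mp hj).1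
      have h1 : x ^ (m + j) ≤ 1 := pow_le_one₀ hx0.le hx1.le
      exact div_nonneg (by linarith) (hden j hj1).le
    · intro j hj
      have hj1 : 1 ≤ j := (Finset.mem_Icc.mp hj).1
      rw [inv_eq_one_div]
      gcongr
      · exact (hden j hj1).le
      · nlinarith [pow_nonneg hx0.le (m + j)]
  -- key positive lower bound on the denominator product, by cases on p
  have hws : ∀ a : ℕ, 1 ≤ a → 1 - x ^ a / (1 - x) ≤ ∏ j ∈ Finset.Icc a ℓ, (1 - x ^ j) := by
    intro a ha
    calc 1 - x ^ a / (1 - x) ≤ 1 - ∑ j ∈ Finset.Icc a ℓ, x ^ j := by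
          have := sum_Icc_pow_le x hx0 hx1 a ℓ
          linarith
      _ ≤ ∏ j ∈ Finset.Icc a ℓ, (1 - x ^ j) :=
          weierstrass_prod _ _ (fun i _ => pow_nonneg hx0.le i)
            (fun i _ => pow_le_one₀ hx0.le hx1.le)
  have h1x : (0:ℝ) < 1 - x := by linarith
  have hkey : ∃ c : ℝ, 0 < c ∧ c ≤ ∏ j ∈ Finset.Icc 1 ℓ, (1 - x ^ j) ∧
      c⁻¹ < 1 + 6 * x := by
    rcases eq_or_lt_of_le hp2 with hp2' | hp3
    · -- p = 2, x = 1/2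
      have hx2 : x = 1/2 := by rw [hxdef, ← hp2']; norm_num
      refine ⟨9/32, by norm_num, ?_, by rw [hx2]; norm_num⟩
      rcases le_or_gt ℓ 2 with hℓ2 | hℓ3
      · interval_cases ℓ <;>
          simp [hx2, Finset.Icc_self, show Finset.Icc 1 2 = {1, 2} from rfl] <;> norm_num
      · have hsplit : (∏ j ∈ Finset.Ioc 0 2, (1 - x ^ j)) * ∏ j ∈ Finset.Ioc 2 ℓ, (1 - x ^ j)
            = ∏ j ∈ Finset.Ioc 0 ℓ, (1 - x ^ j) :=
          Finset.prod_Ioc_consecutive _ (by omega) (by omega)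
        have e1 : Finset.Icc 1 ℓ = Finset.Ioc 0 ℓ := Finset.Icc_add_one_left_eq_Ioc _ _
        have e3 : Finset.Icc 3 ℓ = Finset.Ioc 2 ℓ := Finset.Icc_add_one_left_eq_Ioc _ _
        have h02 : (∏ j ∈ Finset.Ioc 0 2, (1 - x ^ j)) = 3/8 := by
          rw [show Finset.Ioc 0 2 = {1, 2} from rfl]
          simp [hx2]; norm_num
        have htail : (3:ℝ)/4 ≤ ∏ j ∈ Finset.Ioc 2 ℓ, (1 - x ^ j) := by
          rw [← e3]
          have := hws 3 (by omega)
          have hx3 : x ^ 3 / (1 - x) = 1/4 := by rw [hx2]; norm_num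
          linarith
        rw [e1, ← hsplit, h02]
        linarith
    · -- p ≥ 3, x ≤ 1/3
      have hx3 : x ≤ 1/3 := by
        rw [hxdef, inv_le_comm₀ (by positivity) (by norm_num)]
        norm_num
        exact_mod_cast hp3
      have hd : x / (1 - x) ≤ 1/2 := by
        rw [div_le_iff₀ h1x]; nlinarith
      refine ⟨1 - x / (1 - x), by linarith, ?_, ?_⟩
      · have := hws 1 le_rfl
        simpa using this
      · have hc0 : (0:ℝ) < 1 - x / (1 - x) := by linarith
        rw [inv_eq_one_div, div_lt_iff₀ hc0]
        have hceq : (1 - x / (1 - x)) * (1 - x) = 1 - 2*x := by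
          field_simp; ring
        nlinarith [hceq, hx0, hx3, h1x]
  obtain ⟨c, hc0, hcle, hcinv⟩ := hkey
  have hprodpos : 0 < ∏ j ∈ Finset.Icc 1 ℓ, (1 - x ^ j) :=
    lt_of_lt_of_le hc0 hcle
  have hR2 : R < 1 + 6 * x := by
    calc R ≤ (∏ j ∈ Finset.Icc 1 ℓ, (1 - x ^ j))⁻¹ := hRinv
      _ ≤ c⁻¹ := by exact inv_anti₀ hc0 hcle
      _ < 1 + 6 * x := hcinv
  refine ⟨(p:ℝ) * (R - 1), by nlinarith, ?_, ?_⟩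
  · have : (p:ℝ) * (R - 1) < (p:ℝ) * (6 * x) := by
      apply mul_lt_mul_of_pos_left _ hq0
      linarith
    have hpx : (p:ℝ) * (6 * x) = 6 := by
      rw [hxdef]; field_simp
    linarith
  · have h1 : 1 + (p:ℝ) * (R - 1) / p = R := by field_simp; ring
    rw [hprod, h1]
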